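/- For every α ∈ (0,1) and every integer n ≥ 0, one has the identity ∑_{m=0}^{n} c_m^{n+1} m^{α} = (n+1)^{α} − ∑_{m=0}^{n} ((n+1−m)^{1−α} − (n−m)^{1−α}) ((m+1)^{α} − m^{α}). -/
import Mathlib


/-- The coefficients `c_m^{n+1}` of the discretization of the Caputo derivative. -/
noncomputable def caputoCoeff (α : ℝ) (n m : ℕ) : ℝ :=
  if m = 0 then ((n : ℝ) + 1) ^ (1 - α) - (n : ℝ) ^ (1 - α)
  else 2 * ((n : ℝ) + 1 - (m : ℝ)) ^ (1 - α) - ((n : ℝ) + 2 - (m : ℝ)) ^ (1 - α)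
    - ((n : ℝ) - (m : ℝ)) ^ (1 - α)

/-- `∑_{m=0}^{n} c_m^{n+1} m^α
  = (n+1)^α − ∑_{m=0}^{n} ((n+1−m)^{1−α} − (n−m)^{1−α})((m+1)^α − m^α)`. -/
theorem coeff_weighted_sum_identity (α : ℝ) (hα : α ∈ Set.Ioo (0 : ℝ) 1) (n : ℕ) :
    ∑ m ∈ Finset.range (n + 1), caputoCoeff α n m * (m : ℝ) ^ α
      = ((n : ℝ) + 1) ^ α
        - ∑ m ∈ Finset.range (n + 1),
            (((n : ℝ) + 1 - (m : ℝ)) ^ (1 - α) - ((n : ℝ) - (m : ℝ)) ^ (1 - α))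
              * (((m : ℝ) + 1) ^ α - (m : ℝ) ^ α) := by
  obtain ⟨hα0, hα1⟩ := hα
  have h1α : (1 : ℝ) - α ≠ 0 := by linarith
  set H : ℕ → ℝ := fun m =>
    (((n : ℝ) + 2 - m) ^ (1 - α) - ((n : ℝ) + 1 - m) ^ (1 - α)) * (m : ℝ) ^ α with hH
  have key : ∀ m ∈ Finset.range (n + 1),
      caputoCoeff α n m * (m : ℝ) ^ α
        + (((n : ℝ) + 1 - (m : ℝ)) ^ (1 - α) - ((n : ℝ) - (m : ℝ)) ^ (1 - α))
            * (((m : ℝ) + 1) ^ α - (m : ℝ) ^ α)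
        = H (m + 1) - H m := by
    intro m _
    rcases Nat.eq_zero_or_pos m with rfl | hm0
    · simp [caputoCoeff, hH, Real.zero_rpow hα0.ne', Real.one_rpow]
      ring_nf

    · simp only [caputoCoeff, Nat.pos_iff_ne_zero.mp hm0, if_false, hH]
      push_cast
      ring
  have hsum := Finset.sum_congr rfl key
  rw [Finset.sum_add_distrib, Finset.sum_range_sub H] at hsum
  have hH0 : H 0 = 0 := by
    simp [hH, Real.zero_rpow hα0.ne']
  have hHn : H (n + 1) = ((n : ℝ) + 1) ^ α := by
    have e1 : ((n : ℝ) + 2 - ((n : ℕ) + 1 : ℕ)) = 1 := by push_cast; ring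
    have e2 : ((n : ℝ) + 1 - ((n : ℕ) + 1 : ℕ)) = 0 := by push_cast; ring
    simp [hH, e1, e2, Real.zero_rpow h1α, Real.one_rpow]
    norm_num
  rw [hH0, hHn] at hsum
  linarith
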